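/- arXiv:1902.07757 — 6 statements merged into one kernel-verified Lean document; each statement's English description precedes it below -/
import Mathlib

section
/- Let n_c ≥ 1, n_t = 2 n_c, and λ, μ ∈ ℂ. With A, A_c, R_I, P_Φ as follows: A ∈ ℂ^{(n_t+1)×(n_t+1)} with A_{ii} = 1, A_{i,i−1} = −λ, zero otherwise; A_c ∈ ℂ^{(n_c+1)×(n_c+1)} with (A_c)_{ii} = 1, (A_c)_{i,i−1} = −μ, zero otherwise; (R_I)_{i,2i} = 1 and zero otherwise; (P_Φ)_{2i,i} = 1, (P_Φ)_{2i+1,i} = λ and zero otherwise — the two-level error propagator with F-relaxation, T = (I − P_Φ A_c^{−1} R_I A) P_Φ R_I ∈ ℂ^{(n_t+1)×(n_t+1)}, is nilpotent; in particular its spectral radius is zero. -/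
open Matrix

/-- Per-Fourier-mode two-level MGRIT/Parareal with F-relaxation and coarsening factor
`m = 2`: with `n_t = 2 n_c`, fine-grid operator `A` (unit lower bidiagonal with
subdiagonal `−λ`), coarse-grid operator `A_c` (unit lower bidiagonal with subdiagonal
`−μ`), injection restriction `R_I` and ideal interpolation `P_Φ`, the error propagator
`T = (I − P_Φ A_c⁻¹ R_I A) P_Φ R_I` is nilpotent; in particular its spectral radius is
zero, i.e. its spectrum is contained in `{0}`. -/
theorem stmt_5 (nc : ℕ) (hnc : 1 ≤ nc) (lam mu : ℂ)
    (A : Matrix (Fin (2 * nc + 1)) (Fin (2 * nc + 1)) ℂ)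
    (hA : ∀ i j, A i j =
      if (i : ℕ) = (j : ℕ) then 1 else if (i : ℕ) = (j : ℕ) + 1 then -lam else 0)
    (Ac : Matrix (Fin (nc + 1)) (Fin (nc + 1)) ℂ)
    (hAc : ∀ i j, Ac i j =
      if (i : ℕ) = (j : ℕ) then 1 else if (i : ℕ) = (j : ℕ) + 1 then -mu else 0)
    (RI : Matrix (Fin (nc + 1)) (Fin (2 * nc + 1)) ℂ)
    (hRI : ∀ i j, RI i j = if (j : ℕ) = 2 * (i : ℕ) then 1 else 0)
    (PΦ : Matrix (Fin (2 * nc + 1)) (Fin (nc + 1)) ℂ)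
    (hPΦ : ∀ i j, PΦ i j =
      if (i : ℕ) = 2 * (j : ℕ) then 1
      else if (i : ℕ) = 2 * (j : ℕ) + 1 then lam else 0)
    (T : Matrix (Fin (2 * nc + 1)) (Fin (2 * nc + 1)) ℂ)
    (hT : T = (1 - PΦ * Ac⁻¹ * RI * A) * (PΦ * RI)) :
    IsNilpotent T ∧ spectrum ℂ T ⊆ {0} := by
  -- RI * PΦ = 1
  have hRP : RI * PΦ = 1 := by
    ext i j
    rw [Matrix.mul_apply]
    rw [Finset.sum_eq_single (⟨2 * (i : ℕ), by have := i.isLt; omega⟩ : Fin (2 * nc + 1))]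
    · rw [hRI, hPΦ, Matrix.one_apply]
      by_cases h : i = j
      · subst h; simp
      · have h' : (i : ℕ) ≠ (j : ℕ) := fun hh => h (Fin.ext hh)
        (try simp only [Fin.val_mk]); split_ifs <;> first | ring1 | omega
    · intro k _ hk
      have hk' : (k : ℕ) ≠ 2 * (i : ℕ) := fun hh => hk (Fin.ext hh)
      rw [hRI, if_neg hk', zero_mul]
    · intro h; exact absurd (Finset.mem_univ _) h
  -- entries of F := RI * (A * PΦ)
  have hF : ∀ i j : Fin (nc + 1), (RI * (A * PΦ)) i j =
      if (i : ℕ) = (j : ℕ) then 1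
      else if (i : ℕ) = (j : ℕ) + 1 then -(lam * lam) else 0 := by
    intro i j
    rw [Matrix.mul_apply]
    rw [Finset.sum_eq_single (⟨2 * (i : ℕ), by have := i.isLt; omega⟩ : Fin (2 * nc + 1))]
    · rw [hRI, if_pos rfl, one_mul, Matrix.mul_apply]
      by_cases h1 : (i : ℕ) = (j : ℕ)
      · rw [if_pos h1]
        rw [Finset.sum_eq_single (⟨2 * (i : ℕ), by have := i.isLt; omega⟩ : Fin (2 * nc + 1))]
        · rw [hA, hPΦ]
          (try simp only [Fin.val_mk]); split_ifs <;> first | ring1 | omega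
        · intro l _ hl
          have hl' : (l : ℕ) ≠ 2 * (i : ℕ) := fun hh => hl (Fin.ext hh)
          rw [hA, hPΦ]
          (try simp only [Fin.val_mk])
          split_ifs <;> first | ring1 | omega
        · intro h; exact absurd (Finset.mem_univ _) h
      · rw [if_neg h1]
        by_cases h2 : (i : ℕ) = (j : ℕ) + 1
        · rw [if_pos h2]
          rw [Finset.sum_eq_single (⟨2 * (j : ℕ) + 1, by have := i.isLt; omega⟩ :
              Fin (2 * nc + 1))]
          · rw [hA, hPΦ]
            (try simp only [Fin.val_mk]); split_ifs <;> first | ring1 | omega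
          · intro l _ hl
            have hl' : (l : ℕ) ≠ 2 * (j : ℕ) + 1 := fun hh => hl (Fin.ext hh)
            rw [hA, hPΦ]
            (try simp only [Fin.val_mk])
            split_ifs <;> first | ring1 | omega
          · intro h; exact absurd (Finset.mem_univ _) h
        · rw [if_neg h2]
          apply Finset.sum_eq_zero
          intro l _
          rw [hA, hPΦ]
          (try simp only [Fin.val_mk])
          split_ifs <;> first | ring1 | omega
    · intro k _ hk
      have hk' : (k : ℕ) ≠ 2 * (i : ℕ) := fun hh => hk (Fin.ext hh)
      rw [hRI, if_neg hk', zero_mul]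
    · intro h; exact absurd (Finset.mem_univ _) h
  -- Ac is lower triangular with unit diagonal
  have hAcBT : Ac.BlockTriangular OrderDual.toDual := by
    intro i j hij
    have hij' : (i : ℕ) < (j : ℕ) := hij
    rw [hAc]
    split_ifs <;> first | rfl | (exfalso; omega)
  have hdet : Ac.det = 1 := by
    rw [Matrix.det_of_lowerTriangular Ac hAcBT]
    apply Finset.prod_eq_one
    intro i _
    rw [hAc, if_pos rfl]
  have hu : IsUnit Ac.det := hdet ▸ isUnit_one
  haveI : Invertible Ac := Ac.invertibleOfIsUnitDet hu
  have hAcInvBT : Ac⁻¹.BlockTriangular OrderDual.toDual :=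
    Matrix.blockTriangular_inv_of_blockTriangular hAcBT
  -- E := 1 - Ac⁻¹ * F is strictly lower triangular
  set E : Matrix (Fin (nc + 1)) (Fin (nc + 1)) ℂ := 1 - Ac⁻¹ * (RI * (A * PΦ)) with hEdef
  have hEN : E = Ac⁻¹ * (Ac - RI * (A * PΦ)) := by
    rw [hEdef, mul_sub, Matrix.nonsing_inv_mul Ac hu]
  have hE0 : ∀ i j : Fin (nc + 1), (i : ℕ) ≤ (j : ℕ) → E i j = 0 := by
    intro i j hij
    rw [hEN, Matrix.mul_apply]
    apply Finset.sum_eq_zero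
    intro k _
    by_cases hk : (k : ℕ) = (j : ℕ) + 1
    · have hik : Ac⁻¹ i k = 0 := by
        exact hAcInvBT (show i < k by omega)
      rw [hik, zero_mul]
    · have : (Ac - RI * (A * PΦ)) k j = 0 := by
        rw [Matrix.sub_apply, hAc, hF]
        (try simp only [Fin.val_mk]); split_ifs <;> first | ring1 | omega
      rw [this, mul_zero]
  have hEpow : ∀ k, ∀ i j : Fin (nc + 1), (i : ℕ) < (j : ℕ) + k → (E ^ k) i j = 0 := by
    intro k
    induction k with
    | zero =>
      intro i j h
      rw [pow_zero]
      exact Matrix.one_apply_ne (fun hh => by subst hh; omega)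
    | succ k ih =>
      intro i j h
      rw [pow_succ, Matrix.mul_apply]
      apply Finset.sum_eq_zero
      intro l _
      by_cases hl : (j : ℕ) < (l : ℕ)
      · rw [ih i l (by omega), zero_mul]
      · rw [hE0 l j (by omega), mul_zero]
  have hEz : E ^ (nc + 1) = 0 := by
    ext i j
    rw [hEpow (nc + 1) i j (by have := i.isLt; omega)]
    simp
  -- T = PΦ * (E * RI)
  have hTE : T = PΦ * (E * RI) := by
    rw [hT, hEdef]
    simp only [Matrix.sub_mul, Matrix.mul_sub, Matrix.one_mul, Matrix.mul_one, Matrix.mul_assoc]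
  have hTpow : ∀ k, T ^ (k + 1) = PΦ * (E ^ (k + 1) * RI) := by
    intro k
    induction k with
    | zero => rw [pow_one, pow_one, hTE]
    | succ k ih =>
      have key : RI * (PΦ * (E * RI)) = E * RI := by
        rw [← Matrix.mul_assoc, hRP, Matrix.one_mul]
      rw [pow_succ T, ih, hTE]
      simp only [pow_succ, Matrix.mul_assoc, key]
  have hnil : IsNilpotent T := by
    refine ⟨nc + 1, ?_⟩
    rw [hTpow nc, hEz, Matrix.zero_mul, Matrix.mul_zero]
  refine ⟨hnil, ?_⟩
  intro z hz
  rw [Set.mem_singleton_iff]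
  by_contra hz0
  rw [spectrum.mem_iff] at hz
  apply hz
  rw [sub_eq_neg_add]
  exact IsNilpotent.isUnit_add_right_of_commute hnil.neg
    ((isUnit_iff_ne_zero.mpr hz0).map
      (algebraMap ℂ (Matrix (Fin (2 * nc + 1)) (Fin (2 * nc + 1)) ℂ)))
    ((Algebra.commutes z (-T)).symm)
end

section
/- Let n ≥ 1, m ≥ 1 an integer, and λ, μ ∈ ℂ with |μ| < 1. Let E ∈ ℂ^{n×n} be the strictly lower triangular Toeplitz matrix with entries E_{ij} = (λ^m − μ) μ^{i−j−1} for i > j and E_{ij} = 0 otherwise. Then the operator 2-norm satisfies ‖E‖₂ ≤ |λ^m − μ| · (1 − |μ|^n)/(1 − |μ|). -/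
open Matrix

/-- The operator 2-norm (largest singular value) of a complex square matrix. -/
noncomputable def l2OpNorm {n : ℕ} (M : Matrix (Fin n) (Fin n) ℂ) : ℝ :=
  ‖Matrix.toEuclideanCLM (𝕜 := ℂ) M‖

lemma schur_bound {n : ℕ} (A : Matrix (Fin n) (Fin n) ℂ) (C : ℝ) (hC : 0 ≤ C)
    (hrow : ∀ i, ∑ j, ‖A i j‖ ≤ C)
    (hcol : ∀ j, ∑ i, ‖A i j‖ ≤ C) :
    l2OpNorm A ≤ C := by
  refine ContinuousLinearMap.opNorm_le_bound _ hC fun x => ?_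
  have happ : ∀ i, (Matrix.toEuclideanCLM (𝕜 := ℂ) A x) i = A.mulVec x i := by
    intro i
    have := congrFun (Matrix.ofLp_toEuclideanCLM (𝕜 := ℂ) A x) i
    simpa using this
  have hxnn : (0:ℝ) ≤ ‖x‖ := norm_nonneg _
  have key : ‖Matrix.toEuclideanCLM (𝕜 := ℂ) A x‖ ^ 2 ≤ (C * ‖x‖) ^ 2 := by
    have hnorm : ‖Matrix.toEuclideanCLM (𝕜 := ℂ) A x‖ ^ 2
        = ∑ i, ‖A.mulVec x i‖ ^ 2 := by
      rw [EuclideanSpace.norm_eq, Real.sq_sqrt (by positivity)]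
      refine Finset.sum_congr rfl fun i _ => ?_
      rw [happ i]
    have hxsq : ‖x‖ ^ 2 = ∑ j, ‖x j‖ ^ 2 := by
      rw [EuclideanSpace.norm_eq, Real.sq_sqrt (by positivity)]
    rw [hnorm]
    have step1 : ∀ i, ‖A.mulVec x i‖ ^ 2
        ≤ C * ∑ j, ‖A i j‖ * ‖x j‖ ^ 2 := by
      intro i
      have h1 : ‖A.mulVec x i‖ ≤ ∑ j, ‖A i j‖ * ‖x j‖ := by
        calc ‖A.mulVec x i‖ = ‖∑ j, A i j * x j‖ := rfl
          _ ≤ ∑ j, ‖A i j * x j‖ := norm_sum_le _ _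
          _ = ∑ j, ‖A i j‖ * ‖x j‖ :=
              Finset.sum_congr rfl fun j _ => norm_mul _ _
      have h2 : (∑ j, ‖A i j‖ * ‖x j‖) ^ 2
          ≤ (∑ j, ‖A i j‖) * ∑ j, ‖A i j‖ * ‖x j‖ ^ 2 := by
        have := Finset.sum_mul_sq_le_sq_mul_sq Finset.univ
          (fun j => Real.sqrt (‖A i j‖))
          (fun j => Real.sqrt (‖A i j‖) * ‖x j‖)
        calc (∑ j, ‖A i j‖ * ‖x j‖) ^ 2
            = (∑ j, Real.sqrt (‖A i j‖) *
                (Real.sqrt (‖A i j‖) * ‖x j‖)) ^ 2 := by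
              congr 1; refine Finset.sum_congr rfl fun j _ => ?_
              rw [← mul_assoc, Real.mul_self_sqrt (norm_nonneg _)]
          _ ≤ (∑ j, Real.sqrt (‖A i j‖) ^ 2) *
                ∑ j, (Real.sqrt (‖A i j‖) * ‖x j‖) ^ 2 := this
          _ = (∑ j, ‖A i j‖) * ∑ j, ‖A i j‖ * ‖x j‖ ^ 2 := by
              congr 1
              · refine Finset.sum_congr rfl fun j _ => Real.sq_sqrt (norm_nonneg _)
              · refine Finset.sum_congr rfl fun j _ => ?_
                rw [mul_pow, Real.sq_sqrt (norm_nonneg _)]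
      have h3 : ‖A.mulVec x i‖ ^ 2
          ≤ (∑ j, ‖A i j‖ * ‖x j‖) ^ 2 :=
        pow_le_pow_left₀ (norm_nonneg _) h1 2
      refine h3.trans (h2.trans ?_)
      exact mul_le_mul_of_nonneg_right (hrow i)
        (Finset.sum_nonneg fun j _ => by positivity)
    calc ∑ i, ‖A.mulVec x i‖ ^ 2
        ≤ ∑ i, C * ∑ j, ‖A i j‖ * ‖x j‖ ^ 2 :=
          Finset.sum_le_sum fun i _ => step1 i
      _ = C * ∑ j, (∑ i, ‖A i j‖) * ‖x j‖ ^ 2 := by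
          rw [← Finset.mul_sum, Finset.sum_comm]
          congr 1
          refine Finset.sum_congr rfl fun j _ => (Finset.sum_mul ..).symm
      _ ≤ C * ∑ j, C * ‖x j‖ ^ 2 := by
          refine mul_le_mul_of_nonneg_left (Finset.sum_le_sum fun j _ => ?_) hC
          exact mul_le_mul_of_nonneg_right (hcol j) (by positivity)
      _ = (C * ‖x‖) ^ 2 := by
          rw [← Finset.mul_sum, ← hxsq]; ring
  have := Real.sqrt_le_sqrt key
  rwa [Real.sqrt_sq (norm_nonneg _), Real.sqrt_sq (by positivity)] at this

/-- For `|μ| < 1`, the strictly lower triangular Toeplitz Parareal/two-level MGRIT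
F-relaxation coarse-grid error propagator `E`, with `E_{ij} = (λ^m − μ) μ^{i−j−1}` for
`i > j` and `0` otherwise, satisfies `‖E‖₂ ≤ |λ^m − μ| (1 − |μ|^n)/(1 − |μ|)`. -/
theorem stmt_7 (n m : ℕ) (hn : 1 ≤ n) (hm : 1 ≤ m) (lam mu : ℂ)
    (hmu : ‖mu‖ < 1)
    (E : Matrix (Fin n) (Fin n) ℂ)
    (hE : ∀ i j, E i j =
      if (j : ℕ) < (i : ℕ) then (lam ^ m - mu) * mu ^ ((i : ℕ) - (j : ℕ) - 1) else 0) :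
    l2OpNorm E ≤ ‖lam ^ m - mu‖ *
      ((1 - ‖mu‖ ^ n) / (1 - ‖mu‖)) := by
  set c := ‖lam ^ m - mu‖ with hc
  set r := ‖mu‖ with hr
  have hr0 : (0:ℝ) ≤ r := norm_nonneg _
  have hr1 : r ≠ 1 := ne_of_lt hmu
  have hG : ∑ k ∈ Finset.range n, r ^ k = (1 - r ^ n) / (1 - r) := by
    rw [geom_sum_eq hr1, ← neg_div_neg_eq]; ring_nf
  have habs : ∀ i j : Fin n, ‖E i j‖
      = if (j : ℕ) < (i : ℕ) then c * r ^ ((i : ℕ) - (j : ℕ) - 1) else 0 := by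
    intro i j
    rw [hE i j]
    split
    · rw [norm_mul, norm_pow]
    · exact norm_zero
  have hGnn : (0:ℝ) ≤ ∑ k ∈ Finset.range n, r ^ k :=
    Finset.sum_nonneg fun k _ => pow_nonneg hr0 k
  have hcnn : (0:ℝ) ≤ c := norm_nonneg _
  have hbound := schur_bound E (c * ∑ k ∈ Finset.range n, r ^ k)
    (mul_nonneg hcnn hGnn) ?_ ?_
  · rwa [hG] at hbound
  · -- row sums
    intro i
    have : ∑ j, ‖E i j‖
        = ∑ j ∈ Finset.range n, (if j < (i:ℕ) then c * r ^ ((i:ℕ) - j - 1) else 0) := by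
      rw [← Fin.sum_univ_eq_sum_range (fun j => if j < (i:ℕ) then c * r ^ ((i:ℕ) - j - 1) else 0) n]
      exact Finset.sum_congr rfl fun j _ => habs i j
    rw [this]
    have hsub : ∑ j ∈ Finset.range n, (if j < (i:ℕ) then c * r ^ ((i:ℕ) - j - 1) else 0)
        = ∑ j ∈ Finset.range (i:ℕ), c * r ^ ((i:ℕ) - j - 1) := by
      rw [← Finset.sum_subset (Finset.range_subset_range.2 (le_of_lt i.isLt))]
      · exact Finset.sum_congr rfl fun j hj => if_pos (Finset.mem_range.1 hj)
      · intro j _ hj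
        exact if_neg (by simpa using hj)
    rw [hsub]
    have hrefl : ∑ j ∈ Finset.range (i:ℕ), c * r ^ ((i:ℕ) - j - 1)
        = ∑ k ∈ Finset.range (i:ℕ), c * r ^ k := by
      rw [← Finset.sum_range_reflect (fun k => c * r ^ k) (i:ℕ)]
      refine Finset.sum_congr rfl fun j hj => ?_
      have h : (i:ℕ) - j - 1 = (i:ℕ) - 1 - j := by omega
      rw [h]
    rw [hrefl, ← Finset.mul_sum]
    refine mul_le_mul_of_nonneg_left ?_ hcnn
    exact Finset.sum_le_sum_of_subset_of_nonneg
      (Finset.range_subset_range.2 (le_of_lt i.isLt)) (fun k _ _ => pow_nonneg hr0 k)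
  · -- column sums
    intro j
    have : ∑ i, ‖E i j‖
        = ∑ i ∈ Finset.range n, (if (j:ℕ) < i then c * r ^ (i - (j:ℕ) - 1) else 0) := by
      rw [← Fin.sum_univ_eq_sum_range (fun i => if (j:ℕ) < i then c * r ^ (i - (j:ℕ) - 1) else 0) n]
      exact Finset.sum_congr rfl fun i _ => habs i j
    rw [this]
    have hsub : ∑ i ∈ Finset.range n, (if (j:ℕ) < i then c * r ^ (i - (j:ℕ) - 1) else 0)
        = ∑ i ∈ Finset.Ico ((j:ℕ)+1) n, c * r ^ (i - (j:ℕ) - 1) := by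
      rw [← Finset.sum_subset (s₁ := Finset.Ico ((j:ℕ)+1) n) (s₂ := Finset.range n)
        (fun x hx => Finset.mem_range.2 (Finset.mem_Ico.1 hx).2)]
      · exact Finset.sum_congr rfl fun i hi => if_pos (Finset.mem_Ico.1 hi).1
      · intro i hmem hnot
        refine if_neg fun hlt => hnot ?_
        exact Finset.mem_Ico.2 ⟨hlt, Finset.mem_range.1 hmem⟩
    rw [hsub, Finset.sum_Ico_eq_sum_range]
    have : ∑ k ∈ Finset.range (n - ((j:ℕ)+1)), c * r ^ ((j:ℕ) + 1 + k - (j:ℕ) - 1)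
        = ∑ k ∈ Finset.range (n - ((j:ℕ)+1)), c * r ^ k := by
      refine Finset.sum_congr rfl fun k _ => ?_
      have h : (j:ℕ) + 1 + k - (j:ℕ) - 1 = k := by omega
      rw [h]
    rw [this, ← Finset.mul_sum]
    refine mul_le_mul_of_nonneg_left ?_ hcnn
    exact Finset.sum_le_sum_of_subset_of_nonneg
      (Finset.range_subset_range.2 (by omega)) (fun k _ _ => pow_nonneg hr0 k)
end

section
/- Let n ≥ 2, m ≥ 1 an integer, and λ, μ ∈ ℂ with |μ| < 1. Let E′ ∈ ℂ^{n×n} be the Toeplitz matrix with entries E′_{ij} = λ^m (λ^m − μ) μ^{i−j−2} for i ≥ j + 2 and E′_{ij} = 0 otherwise. Then the operator 2-norm satisfies ‖E′‖₂ ≤ |λ|^m · |λ^m − μ| · (1 − |μ|^{n−1})/(1 − |μ|). -/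
open Matrix

/-- Schur-test style bound: if all row sums and all column sums of absolute values
are bounded by `C`, then the operator 2-norm is bounded by `C`. -/
lemma l2OpNorm_le_of_row_col {n : ℕ} (M : Matrix (Fin n) (Fin n) ℂ) {C : ℝ} (hC : 0 ≤ C)
    (hrow : ∀ i, ∑ j, ‖M i j‖ ≤ C)
    (hcol : ∀ j, ∑ i, ‖M i j‖ ≤ C) :
    l2OpNorm M ≤ C := by
  rw [l2OpNorm]
  apply ContinuousLinearMap.opNorm_le_bound _ hC
  intro x
  have happ : ∀ i, (Matrix.toEuclideanCLM (𝕜 := ℂ) M x) i = ∑ j, M i j * x j := by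
    intro i
    rfl
  rw [EuclideanSpace.norm_eq, EuclideanSpace.norm_eq]
  have key : ∑ i, ‖(Matrix.toEuclideanCLM (𝕜 := ℂ) M x) i‖ ^ 2 ≤
      C ^ 2 * ∑ j, ‖x j‖ ^ 2 := by
    calc ∑ i, ‖(Matrix.toEuclideanCLM (𝕜 := ℂ) M x) i‖ ^ 2
        ≤ ∑ i, (∑ j, ‖M i j‖ * ‖x j‖) ^ 2 := by
          apply Finset.sum_le_sum
          intro i _
          apply pow_le_pow_left₀ (norm_nonneg _)
          rw [happ i]
          refine (norm_sum_le _ _).trans_eq ?_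
          exact Finset.sum_congr rfl fun j _ => norm_mul _ _
      _ ≤ ∑ i, ((∑ j, ‖M i j‖) * ∑ j, ‖M i j‖ * ‖x j‖ ^ 2) := by
          apply Finset.sum_le_sum
          intro i _
          apply Finset.sum_sq_le_sum_mul_sum_of_sq_eq_mul
          · intro j _; exact norm_nonneg _
          · intro j _; positivity
          · intro j _; ring
      _ ≤ ∑ i, (C * ∑ j, ‖M i j‖ * ‖x j‖ ^ 2) := by
          apply Finset.sum_le_sum
          intro i _
          apply mul_le_mul_of_nonneg_right (hrow i)
          apply Finset.sum_nonneg
          intro j _; positivity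
      _ = C * ∑ j, (∑ i, ‖M i j‖) * ‖x j‖ ^ 2 := by
          rw [← Finset.mul_sum, Finset.sum_comm]
          congr 1
          exact Finset.sum_congr rfl fun j _ => (Finset.sum_mul _ _ _).symm
      _ ≤ C * ∑ j, C * ‖x j‖ ^ 2 := by
          apply mul_le_mul_of_nonneg_left _ hC
          apply Finset.sum_le_sum
          intro j _
          exact mul_le_mul_of_nonneg_right (hcol j) (by positivity)
      _ = C ^ 2 * ∑ j, ‖x j‖ ^ 2 := by
          rw [← Finset.mul_sum]; ring
  calc √(∑ i, ‖(Matrix.toEuclideanCLM (𝕜 := ℂ) M x) i‖ ^ 2)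
      ≤ √(C ^ 2 * ∑ j, ‖x j‖ ^ 2) := Real.sqrt_le_sqrt key
    _ = C * √(∑ j, ‖x j‖ ^ 2) := by
        rw [Real.sqrt_mul (sq_nonneg C), Real.sqrt_sq hC]

/-- For `|μ| < 1`, the Toeplitz two-level MGRIT FCF-relaxation coarse-grid error
propagator `E′`, with `E′_{ij} = λ^m (λ^m − μ) μ^{i−j−2}` for `i ≥ j + 2` and `0`
otherwise, satisfies `‖E′‖₂ ≤ |λ|^m |λ^m − μ| (1 − |μ|^{n−1})/(1 − |μ|)`. -/
theorem stmt_8 (n m : ℕ) (hn : 2 ≤ n) (hm : 1 ≤ m) (lam mu : ℂ)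
    (hmu : ‖mu‖ < 1)
    (E' : Matrix (Fin n) (Fin n) ℂ)
    (hE' : ∀ i j, E' i j =
      if (j : ℕ) + 2 ≤ (i : ℕ) then
        lam ^ m * (lam ^ m - mu) * mu ^ ((i : ℕ) - (j : ℕ) - 2) else 0) :
    l2OpNorm E' ≤ ‖lam‖ ^ m * ‖lam ^ m - mu‖ *
      ((1 - ‖mu‖ ^ (n - 1)) / (1 - ‖mu‖)) := by
  set q : ℝ := ‖mu‖ with hq
  set c : ℝ := ‖lam‖ ^ m * ‖lam ^ m - mu‖ with hc
  have hq0 : 0 ≤ q := norm_nonneg mu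
  have hq1 : q ≠ 1 := ne_of_lt hmu
  have hc0 : 0 ≤ c := by positivity
  have hgeom : ∑ k ∈ Finset.range (n - 1), q ^ k = (1 - q ^ (n - 1)) / (1 - q) := by
    rw [geom_sum_eq hq1, ← neg_div_neg_eq]
    ring_nf
  have habs : ∀ i j : Fin n, ‖E' i j‖ =
      if (j : ℕ) + 2 ≤ (i : ℕ) then c * q ^ ((i : ℕ) - (j : ℕ) - 2) else 0 := by
    intro i j
    rw [hE']
    split
    · rw [norm_mul, norm_mul, norm_pow, norm_pow, hc, hq]
    · simp
  have hsum_nonneg : ∀ k : ℕ, (0:ℝ) ≤ c * q ^ k := fun k => by positivity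
  -- row sums
  have hrow : ∀ i : Fin n, ∑ j, ‖E' i j‖ ≤ c * ((1 - q ^ (n - 1)) / (1 - q)) := by
    intro i
    have h1 : ∑ j, ‖E' i j‖ =
        ∑ j ∈ Finset.range n, (if j + 2 ≤ (i : ℕ) then c * q ^ ((i : ℕ) - j - 2) else 0) := by
      rw [← Fin.sum_univ_eq_sum_range (fun j => if j + 2 ≤ (i : ℕ) then
        c * q ^ ((i : ℕ) - j - 2) else 0) n]
      exact Finset.sum_congr rfl fun j _ => habs i j
    have h2 : Finset.filter (fun j => j + 2 ≤ (i : ℕ)) (Finset.range n) =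
        Finset.range ((i : ℕ) - 1) := by
      ext j
      simp only [Finset.mem_filter, Finset.mem_range]
      have := i.isLt
      omega
    rw [h1, Finset.sum_ite, Finset.sum_const_zero, add_zero, h2]
    have h3 : ∑ j ∈ Finset.range ((i : ℕ) - 1), c * q ^ ((i : ℕ) - j - 2) =
        ∑ j ∈ Finset.range ((i : ℕ) - 1), c * q ^ j := by
      rw [← Finset.sum_range_reflect (fun k => c * q ^ k) ((i : ℕ) - 1)]
      apply Finset.sum_congr rfl
      intro j hj
      simp only [Finset.mem_range] at hj
      congr 2
      omega
    rw [h3]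
    calc ∑ j ∈ Finset.range ((i : ℕ) - 1), c * q ^ j
        ≤ ∑ j ∈ Finset.range (n - 1), c * q ^ j := by
          apply Finset.sum_le_sum_of_subset_of_nonneg
          · apply Finset.range_subset_range.2
            have := i.isLt
            omega
          · intro k _ _; exact hsum_nonneg k
      _ = c * ((1 - q ^ (n - 1)) / (1 - q)) := by
          rw [← Finset.mul_sum, hgeom]
  -- column sums
  have hcol : ∀ j : Fin n, ∑ i, ‖E' i j‖ ≤ c * ((1 - q ^ (n - 1)) / (1 - q)) := by
    intro j
    have h1 : ∑ i, ‖E' i j‖ =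
        ∑ i ∈ Finset.range n, (if (j : ℕ) + 2 ≤ i then c * q ^ (i - (j : ℕ) - 2) else 0) := by
      rw [← Fin.sum_univ_eq_sum_range (fun i => if (j : ℕ) + 2 ≤ i then
        c * q ^ (i - (j : ℕ) - 2) else 0) n]
      exact Finset.sum_congr rfl fun i _ => habs i j
    have h2 : Finset.filter (fun i => (j : ℕ) + 2 ≤ i) (Finset.range n) =
        Finset.Ico ((j : ℕ) + 2) n := by
      ext i
      simp only [Finset.mem_filter, Finset.mem_range, Finset.mem_Ico]
      omega
    rw [h1, Finset.sum_ite, Finset.sum_const_zero, add_zero, h2,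
      Finset.sum_Ico_eq_sum_range]
    have h3 : ∑ k ∈ Finset.range (n - ((j : ℕ) + 2)),
        c * q ^ ((j : ℕ) + 2 + k - (j : ℕ) - 2) =
        ∑ k ∈ Finset.range (n - ((j : ℕ) + 2)), c * q ^ k := by
      apply Finset.sum_congr rfl
      intro k _
      congr 2
      omega
    rw [h3]
    calc ∑ k ∈ Finset.range (n - ((j : ℕ) + 2)), c * q ^ k
        ≤ ∑ k ∈ Finset.range (n - 1), c * q ^ k := by
          apply Finset.sum_le_sum_of_subset_of_nonneg
          · apply Finset.range_subset_range.2
            omega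
          · intro k _ _; exact hsum_nonneg k
      _ = c * ((1 - q ^ (n - 1)) / (1 - q)) := by
          rw [← Finset.mul_sum, hgeom]
  have hC0 : 0 ≤ c * ((1 - q ^ (n - 1)) / (1 - q)) := by
    apply mul_nonneg hc0
    rw [← hgeom]
    apply Finset.sum_nonneg
    intro k _
    positivity
  have := l2OpNorm_le_of_row_col E' hC0 hrow hcol
  calc l2OpNorm E' ≤ c * ((1 - q ^ (n - 1)) / (1 - q)) := this
    _ = ‖lam‖ ^ m * ‖lam ^ m - mu‖ *
        ((1 - ‖mu‖ ^ (n - 1)) / (1 - ‖mu‖)) := by rw [hc, hq]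
end

section
/- Let c ∈ ℝ with 0 ≤ c ≤ 1/2, and for θ ∈ ℝ define z(θ) = −(c/2)·(3 − 4e^{−iθ} + e^{−2iθ}) ∈ ℂ. Then |1 + z(θ) + z(θ)²/2| ≤ 1 for all θ ∈ ℝ. That is, the explicit scheme combining Heun's second-order Runge–Kutta method with the second-order upwind finite-difference discretization of ∂_t u + a ∂_x u = 0 on a periodic grid is stable under the CFL condition a Δt/Δx ≤ 1/2. -/
private lemma auxG (c s : ℝ) (h0 : 0 ≤ c) (h1 : c ≤ 1/2) (h2 : 0 ≤ s) (h3 : s ≤ 2) :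
    0 ≤ 2 - 2*c*s^2 + 2*c^2*s + 3*c^2*s^2 - c^3 - 3*c^3*s - 9/4*c^3*s^2 := by
  nlinarith [mul_nonneg h0 h2, sq_nonneg (s-2), sq_nonneg (c-1/2),
    mul_nonneg (sub_nonneg.2 h1) (sub_nonneg.2 h3), sq_nonneg (c*s-1),
    mul_nonneg (mul_nonneg h0 h0) h2, sq_nonneg s, sq_nonneg c,
    mul_nonneg (sub_nonneg.2 h1) h2, mul_nonneg h0 (sub_nonneg.2 h3)]

private lemma auxKey (c x y : ℝ) (h0 : 0 ≤ c) (h1 : c ≤ 1/2) (hxy : x^2 + y^2 = 1) :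
    ((1 : ℝ) + (-3/2 : ℝ) * c + (1/2 : ℝ) * c * y ^ 2 + (2 : ℝ) * c * x + (-1/2 : ℝ) * c * x ^ 2 + (9/8 : ℝ) * c ^ 2 + (-11/4 : ℝ) * c ^ 2 * y ^ 2 + (1/8 : ℝ) * c ^ 2 * y ^ 4 + (-3 : ℝ) * c ^ 2 * x + (3 : ℝ) * c ^ 2 * x * y ^ 2 + (11/4 : ℝ) * c ^ 2 * x ^ 2 + (-3/4 : ℝ) * c ^ 2 * x ^ 2 * y ^ 2 + (-1 : ℝ) * c ^ 2 * x ^ 3 + (1/8 : ℝ) * c ^ 2 * x ^ 4)^2 + ((-2 : ℝ) * c * y + (1 : ℝ) * c * x * y + (3 : ℝ) * c ^ 2 * y + (-1 : ℝ) * c ^ 2 * y ^ 3 + (-11/2 : ℝ) * c ^ 2 * x * y + (1/2 : ℝ) * c ^ 2 * x * y ^ 3 + (3 : ℝ) * c ^ 2 * x ^ 2 * y + (-1/2 : ℝ) * c ^ 2 * x ^ 3 * y)^2 ≤ 1 := by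
  have hx1 : x ≤ 1 := by nlinarith [sq_nonneg y, sq_nonneg (x-1)]
  have hx2 : -1 ≤ x := by nlinarith [sq_nonneg y, sq_nonneg (x+1)]
  have hG := auxG c (1-x) h0 h1 (by linarith) (by linarith)
  have hfac : ((1 : ℝ) + (-3/2 : ℝ) * c + (1/2 : ℝ) * c * y ^ 2 + (2 : ℝ) * c * x + (-1/2 : ℝ) * c * x ^ 2 + (9/8 : ℝ) * c ^ 2 + (-11/4 : ℝ) * c ^ 2 * y ^ 2 + (1/8 : ℝ) * c ^ 2 * y ^ 4 + (-3 : ℝ) * c ^ 2 * x + (3 : ℝ) * c ^ 2 * x * y ^ 2 + (11/4 : ℝ) * c ^ 2 * x ^ 2 + (-3/4 : ℝ) * c ^ 2 * x ^ 2 * y ^ 2 + (-1 : ℝ) * c ^ 2 * x ^ 3 + (1/8 : ℝ) * c ^ 2 * x ^ 4)^2 + ((-2 : ℝ) * c * y + (1 : ℝ) * c * x * y + (3 : ℝ) * c ^ 2 * y + (-1 : ℝ) * c ^ 2 * y ^ 3 + (-11/2 : ℝ) * c ^ 2 * x * y + (1/2 : ℝ) * c ^ 2 * x * y ^ 3 +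 (3 : ℝ) * c ^ 2 * x ^ 2 * y + (-1/2 : ℝ) * c ^ 2 * x ^ 3 * y)^2
      = 1 - c*(1-x)^2 * (2 - 2*c*(1-x)^2 + 2*c^2*(1-x) + 3*c^2*(1-x)^2 - c^3 - 3*c^3*(1-x) - 9/4*c^3*(1-x)^2) := by
    linear_combination ((1 : ℝ) * c + (-5/2 : ℝ) * c ^ 2 + (1/2 : ℝ) * c ^ 2 * y ^ 2 + (4 : ℝ) * c ^ 2 * x + (-3/2 : ℝ) * c ^ 2 * x ^ 2 + (-13/8 : ℝ) * c ^ 3 + (1 : ℝ) * c ^ 3 * y ^ 2 + (1/8 : ℝ) * c ^ 3 * y ^ 4 + (9/2 : ℝ) * c ^ 3 * x + (-1/2 : ℝ) * c ^ 3 * x * y ^ 2 + (-17/4 : ℝ) * c ^ 3 * x ^ 2 + (3/2 : ℝ) * c ^ 3 * x ^ 3 + (-1/8 : ℝ) * c ^ 3 * x ^ 4 + (319/64 : ℝ) * c ^ 4 + (139/64 : ℝ) * c ^ 4 * y ^ 2 + (21/64 : ℝ) * c ^ 4 * y ^ 4 + (1/64 : ℝ) * c ^ 4 * y ^ 6 +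 (-53/4 : ℝ) * c ^ 4 * x + (-7/2 : ℝ) * c ^ 4 * x * y ^ 2 + (-1/4 : ℝ) * c ^ 4 * x * y ^ 4 + (851/64 : ℝ) * c ^ 4 * x ^ 2 + (65/32 : ℝ) * c ^ 4 * x ^ 2 * y ^ 2 + (3/64 : ℝ) * c ^ 4 * x ^ 2 * y ^ 4 + (-13/2 : ℝ) * c ^ 4 * x ^ 3 + (-1/2 : ℝ) * c ^ 4 * x ^ 3 * y ^ 2 + (109/64 : ℝ) * c ^ 4 * x ^ 4 + (3/64 : ℝ) * c ^ 4 * x ^ 4 * y ^ 2 + (-1/4 : ℝ) * c ^ 4 * x ^ 5 + (1/64 : ℝ) * c ^ 4 * x ^ 6) * hxy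
  rw [hfac]
  have := mul_nonneg (mul_nonneg h0 (sq_nonneg (1-x))) hG
  linarith

/-- Stability of the explicit scheme pairing Heun's second-order Runge–Kutta method
(stability function `R(z) = 1 + z + z²/2`) with the second-order upwind finite-difference
discretization of the advection equation (symbol `z(θ) = −(c/2)(3 − 4e^{−iθ} + e^{−2iθ})`)
under the CFL condition `c = aΔt/Δx ≤ 1/2`: every eigenvalue of the time stepper has
modulus at most 1. -/
theorem stmt_11 (c : ℝ) (hc0 : 0 ≤ c) (hc : c ≤ 1 / 2) (θ : ℝ)
    (z : ℂ)
    (hz : z = -((c : ℂ) / 2) *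
      (3 - 4 * Complex.exp (-(Complex.I * θ)) + Complex.exp (-(2 * Complex.I * θ)))) :
    ‖1 + z + z ^ 2 / 2‖ ≤ 1 := by
  set x := Real.cos θ with hxd
  set y := Real.sin θ with hyd
  have hxy : x^2 + y^2 = 1 := by
    rw [hxd, hyd]; exact Real.cos_sq_add_sin_sq θ
  have he : Complex.exp (-(Complex.I * θ)) = (x:ℂ) - (y:ℂ) * Complex.I := by
    rw [show -(Complex.I * (θ:ℂ)) = ((-θ : ℝ) : ℂ) * Complex.I by push_cast; ring,
      Complex.exp_mul_I, ← Complex.ofReal_cos, ← Complex.ofReal_sin, Real.cos_neg, Real.sin_neg,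
      hxd, hyd, Complex.ofReal_cos, Complex.ofReal_sin]
    push_cast
    ring
  have he2 : Complex.exp (-(2 * Complex.I * θ)) = ((x:ℂ) - (y:ℂ) * Complex.I)^2 := by
    rw [show -(2 * Complex.I * (θ:ℂ)) = (-(Complex.I*(θ:ℂ))) + (-(Complex.I*(θ:ℂ))) by ring,
      Complex.exp_add, he]
    ring
  have hR : 1 + z + z ^ 2 / 2
      = (((1 : ℝ) + (-3/2 : ℝ) * c + (1/2 : ℝ) * c * y ^ 2 + (2 : ℝ) * c * x + (-1/2 : ℝ) * c * x ^ 2 + (9/8 : ℝ) * c ^ 2 + (-11/4 : ℝ) * c ^ 2 * y ^ 2 + (1/8 : ℝ) * c ^ 2 * y ^ 4 + (-3 : ℝ) * c ^ 2 * x + (3 : ℝ) * c ^ 2 * x * y ^ 2 + (11/4 : ℝ) * c ^ 2 * x ^ 2 + (-3/4 : ℝ) * c ^ 2 * x ^ 2 * y ^ 2 + (-1 : ℝ) * c ^ 2 * x ^ 3 + (1/8 : ℝ) * c ^ 2 * x ^ 4 : ℝ) : ℂ) + (((-2 : ℝ) * c * y + (1 : ℝ) * c * x * y + (3 : ℝ)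 * c ^ 2 * y + (-1 : ℝ) * c ^ 2 * y ^ 3 + (-11/2 : ℝ) * c ^ 2 * x * y + (1/2 : ℝ) * c ^ 2 * x * y ^ 3 + (3 : ℝ) * c ^ 2 * x ^ 2 * y + (-1/2 : ℝ) * c ^ 2 * x ^ 3 * y : ℝ) : ℂ) * Complex.I := by
    subst hz
    rw [he, he2]
    push_cast
    linear_combination ((-1/2 : ℂ) * (c:ℂ) * (y:ℂ) ^ 2 + (11/4 : ℂ) * (c:ℂ) ^ 2 * (y:ℂ) ^ 2 + (1 : ℂ) * (c:ℂ) ^ 2 * (y:ℂ) ^ 3 * Complex.I + (-1/8 : ℂ) * (c:ℂ) ^ 2 * (y:ℂ) ^ 4 + (1/8 : ℂ) * (c:ℂ) ^ 2 * (y:ℂ) ^ 4 * Complex.I ^ 2 + (-3 : ℂ) * (c:ℂ) ^ 2 * (x:ℂ) * (y:ℂ) ^ 2 + (-1/2 : ℂ) * (c:ℂ) ^ 2 * (x:ℂ) * (y:ℂ) ^ 3 * Complex.I + (3/4 : ℂ) * (c:ℂ) ^ 2 * (x:ℂ) ^ 2 * (y:ℂ) ^ 2) * Complex.I_sq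
  rw [hR, Complex.norm_add_mul_I]
  exact Real.sqrt_le_one.2 <| auxKey c x y hc0 (by linarith) hxy
end

section
/- Let ζ be the unique real root in the interval (2/5, 1/2) of x³ − 3x² + (3/2)x − 1/6 = 0 (ζ ≈ 0.4358665215), and define the rational function R(z) = (1 + (1 − 3ζ)z + (3ζ² − 3ζ + 1/2)z²)/(1 − ζz)³. Then for every z ∈ ℂ with Re z ≤ 0 one has 1 − ζz ≠ 0 and |R(z)| ≤ 1; i.e., the third-order L-stable SDIRK method is A-stable. -/
set_option maxHeartbeats 2000000 in
/-- A-stability of the third-order L-stable SDIRK method: with `ζ` the real root in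
`(2/5, 1/2)` of `x³ − 3x² + (3/2)x − 1/6 = 0`, its stability function
`R(z) = (1 + (1 − 3ζ)z + (3ζ² − 3ζ + 1/2)z²)/(1 − ζz)³` satisfies `1 − ζz ≠ 0` and
`|R(z)| ≤ 1` for every `z` in the closed left half-plane `Re z ≤ 0`. -/
theorem stmt_13 (ζ : ℝ) (hζ1 : 2 / 5 < ζ) (hζ2 : ζ < 1 / 2)
    (hroot : ζ ^ 3 - 3 * ζ ^ 2 + (3 / 2) * ζ - 1 / 6 = 0)
    (R : ℂ → ℂ)
    (hR : ∀ z : ℂ, R z =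
      (1 + (1 - 3 * (ζ : ℂ)) * z + (3 * (ζ : ℂ) ^ 2 - 3 * (ζ : ℂ) + 1 / 2) * z ^ 2) /
        (1 - (ζ : ℂ) * z) ^ 3) :
    ∀ z : ℂ, z.re ≤ 0 → 1 - (ζ : ℂ) * z ≠ 0 ∧ ‖R z‖ ≤ 1 := by
  -- tight rational bounds on ζ from the cubic equation
  have hl : (4358 : ℝ)/10000 < ζ := by
    nlinarith [sq_nonneg (ζ - 4358/10000), sq_nonneg (ζ - 1/2), sq_nonneg ζ]
  have hu : ζ < (4359 : ℝ)/10000 := by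
    nlinarith [sq_nonneg (ζ - 4359/10000), sq_nonneg (ζ - 2/5), sq_nonneg ζ]
  -- nonnegativity of the coefficients of the energy polynomial
  have hc04 : (0:ℝ) ≤ -1/4 + 2*ζ - 3*ζ^2 := by nlinarith [sq_nonneg (ζ - 4358/10000), sq_nonneg (ζ - 4359/10000)]
  have hc06 : (0:ℝ) ≤ 109/36 - 26*ζ + 175/4*ζ^2 := by nlinarith [sq_nonneg (ζ - 4358/10000), sq_nonneg (ζ - 4359/10000)]
  have hc14 : (0:ℝ) ≤ 15/2 - 129/2*ζ + 109*ζ^2 := by nlinarith [sq_nonneg (ζ - 4358/10000), sq_nonneg (ζ - 4359/10000)]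
  have hc20 : (0:ℝ) ≤ -2 + 12*ζ := by linarith
  have hc22 : (0:ℝ) ≤ 11/2 - 48*ζ + 84*ζ^2 := by nlinarith [sq_nonneg (ζ - 4358/10000), sq_nonneg (ζ - 4359/10000)]
  have hc24 : (0:ℝ) ≤ 109/12 - 78*ζ + 525/4*ζ^2 := by nlinarith [sq_nonneg (ζ - 4358/10000), sq_nonneg (ζ - 4359/10000)]
  have hc30 : (0:ℝ) ≤ 4/3 - 12*ζ + 30*ζ^2 := by nlinarith [sq_nonneg (ζ - 4358/10000), sq_nonneg (ζ - 4359/10000)]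
  have hc32 : (0:ℝ) ≤ 15 - 129*ζ + 218*ζ^2 := by nlinarith [sq_nonneg (ζ - 4358/10000), sq_nonneg (ζ - 4359/10000)]
  have hc40 : (0:ℝ) ≤ 23/4 - 50*ζ + 87*ζ^2 := by nlinarith [sq_nonneg (ζ - 4358/10000), sq_nonneg (ζ - 4359/10000)]
  -- the key real inequality
  have key : ∀ x y : ℝ, x ≤ 0 →
      (1 + (1 - 3*ζ)*x + (3*ζ^2 - 3*ζ + 1/2)*(x^2 - y^2))^2
        + ((1 - 3*ζ)*y + 2*(3*ζ^2 - 3*ζ + 1/2)*(x*y))^2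
      ≤ ((1 - ζ*x)^2 + (ζ*y)^2)^3 := by
    intro x y hx
    have hx0 : (0:ℝ) ≤ -x := by linarith
    have hm2 : (0:ℝ) ≤ (-x)*y^2 := mul_nonneg hx0 (sq_nonneg y)
    have hm5 : (0:ℝ) ≤ (-x)*y^4 := mul_nonneg hx0 (by positivity)
    have hm9 : (0:ℝ) ≤ (-x)*x^2 := mul_nonneg hx0 (sq_nonneg x)
    have hm10 : (0:ℝ) ≤ (-x)*x^2*y^2 := mul_nonneg hm9 (sq_nonneg y)
    have hm13 : (0:ℝ) ≤ (-x)*x^4 := mul_nonneg hx0 (by positivity)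
    have t1 : (0:ℝ) ≤ 2 * (-x) := by linarith
    have t2 : (0:ℝ) ≤ 6*ζ^2 * ((-x)*y^2) := mul_nonneg (by positivity) hm2
    have t3 : (0:ℝ) ≤ (-1/4 + 2*ζ - 3*ζ^2) * y^4 := mul_nonneg hc04 (by positivity)
    have t4 : (0:ℝ) ≤ (109/36 - 26*ζ + 175/4*ζ^2) * y^6 := mul_nonneg hc06 (by positivity)
    have t5 : (0:ℝ) ≤ (15/2 - 129/2*ζ + 109*ζ^2) * ((-x)*y^4) := mul_nonneg hc14 hm5
    have t6 : (0:ℝ) ≤ (-2 + 12*ζ) * x^2 := mul_nonneg hc20 (sq_nonneg x)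
    have t7 : (0:ℝ) ≤ (11/2 - 48*ζ + 84*ζ^2) * (x^2*y^2) := mul_nonneg hc22 (by positivity)
    have t8 : (0:ℝ) ≤ (109/12 - 78*ζ + 525/4*ζ^2) * (x^2*y^4) := mul_nonneg hc24 (by positivity)
    have t9 : (0:ℝ) ≤ (4/3 - 12*ζ + 30*ζ^2) * ((-x)*x^2) := mul_nonneg hc30 hm9
    have t10 : (0:ℝ) ≤ (15 - 129*ζ + 218*ζ^2) * ((-x)*x^2*y^2) := mul_nonneg hc32 hm10
    have t11 : (0:ℝ) ≤ (23/4 - 50*ζ + 87*ζ^2) * x^4 := mul_nonneg hc40 (by positivity)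
    have t12 : (0:ℝ) ≤ (109/12 - 78*ζ + 525/4*ζ^2) * (x^4*y^2) := mul_nonneg hc24 (by positivity)
    have t13 : (0:ℝ) ≤ (15/2 - 129/2*ζ + 109*ζ^2) * ((-x)*x^4) := mul_nonneg hc14 hm13
    have t14 : (0:ℝ) ≤ (109/36 - 26*ζ + 175/4*ζ^2) * x^6 := mul_nonneg hc06 (by positivity)
    have hEq : ((1 - ζ*x)^2 + (ζ*y)^2)^3
        - ((1 + (1 - 3*ζ)*x + (3*ζ^2 - 3*ζ + 1/2)*(x^2 - y^2))^2
          + ((1 - 3*ζ)*y + 2*(3*ζ^2 - 3*ζ + 1/2)*(x*y))^2)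
        = 2 * (-x) + 6*ζ^2 * ((-x)*y^2)
          + (-1/4 + 2*ζ - 3*ζ^2) * y^4
          + (109/36 - 26*ζ + 175/4*ζ^2) * y^6
          + (15/2 - 129/2*ζ + 109*ζ^2) * ((-x)*y^4)
          + (-2 + 12*ζ) * x^2
          + (11/2 - 48*ζ + 84*ζ^2) * (x^2*y^2)
          + (109/12 - 78*ζ + 525/4*ζ^2) * (x^2*y^4)
          + (4/3 - 12*ζ + 30*ζ^2) * ((-x)*x^2)
          + (15 - 129*ζ + 218*ζ^2) * ((-x)*x^2*y^2)
          + (23/4 - 50*ζ + 87*ζ^2) * x^4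
          + (109/12 - 78*ζ + 525/4*ζ^2) * (x^4*y^2)
          + (15/2 - 129/2*ζ + 109*ζ^2) * ((-x)*x^4)
          + (109/36 - 26*ζ + 175/4*ζ^2) * x^6 := by
      linear_combination ((-6)*y^4*ζ + (109/6)*y^6 + (15/2)*y^6*ζ + 3*y^6*ζ^2 + y^6*ζ^3
        + 6*x*y^2 + (-45)*x*y^4 + (-18)*x*y^4*ζ + (-6)*x*y^4*ζ^2
        + 36*x^2*y^2 + (109/2)*x^2*y^4 + (45/2)*x^2*y^4*ζ + 9*x^2*y^4*ζ^2 + 3*x^2*y^4*ζ^3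
        + (-2)*x^3 + (-90)*x^3*y^2 + (-36)*x^3*y^2*ζ + (-12)*x^3*y^2*ζ^2
        + 36*x^4 + 6*x^4*ζ + (109/2)*x^4*y^2 + (45/2)*x^4*y^2*ζ + 9*x^4*y^2*ζ^2 + 3*x^4*y^2*ζ^3
        + (-45)*x^5 + (-18)*x^5*ζ + (-6)*x^5*ζ^2
        + (109/6)*x^6 + (15/2)*x^6*ζ + 3*x^6*ζ^2 + x^6*ζ^3) * hroot
    linarith
  intro z hz
  have hζ0 : (0:ℝ) < ζ := by linarith
  have hre : ((1 : ℂ) - (ζ:ℂ) * z).re = 1 - ζ * z.re := by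
    simp [Complex.sub_re, Complex.mul_re]
  have hrepos : (0:ℝ) < 1 - ζ * z.re := by nlinarith
  have hden : (1 : ℂ) - (ζ:ℂ) * z ≠ 0 := by
    intro h
    rw [h] at hre
    simp at hre
    linarith
  refine ⟨hden, ?_⟩
  rw [hR]
  rw [norm_div, div_le_one (by
    have := norm_pos_iff.mpr (pow_ne_zero 3 hden)
    simpa using this)]
  apply le_of_pow_le_pow_left₀ (n := 2) two_ne_zero (norm_nonneg _)
  rw [Complex.sq_norm, Complex.sq_norm, map_pow]
  have h1 : Complex.normSq (1 + (1 - 3 * (ζ:ℂ)) * z + (3 * (ζ:ℂ) ^ 2 - 3 * (ζ:ℂ) + 1 / 2) * z ^ 2)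
      = (1 + (1 - 3*ζ)*z.re + (3*ζ^2 - 3*ζ + 1/2)*(z.re^2 - z.im^2))^2
        + ((1 - 3*ζ)*z.im + 2*(3*ζ^2 - 3*ζ + 1/2)*(z.re*z.im))^2 := by
    simp [Complex.normSq_apply, Complex.add_re, Complex.add_im, Complex.mul_re, Complex.mul_im,
      Complex.sub_re, Complex.sub_im, Complex.one_re, Complex.one_im, Complex.ofReal_re,
      Complex.ofReal_im, pow_two]
    ring
  have h2 : Complex.normSq (1 - (ζ:ℂ) * z) = (1 - ζ*z.re)^2 + (ζ*z.im)^2 := by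
    simp [Complex.normSq_apply, Complex.sub_re, Complex.sub_im, Complex.mul_re, Complex.mul_im,
      Complex.one_re, Complex.one_im, Complex.ofReal_re, Complex.ofReal_im]
    ring
  rw [h1, h2]
  exact key z.re z.im hz
end

section
/- Let ζ be the unique real root in the interval (2/5, 1/2) of x³ − 3x² + (3/2)x − 1/6 = 0, and define R(z) = (1 + (1 − 3ζ)z + (3ζ² − 3ζ + 1/2)z²)/(1 − ζz)³. Then for every c ≥ 0 and every θ ∈ ℝ, setting z(θ) = −(c/6)·(e^{−2iθ} − 6e^{−iθ} + 3 + 2e^{iθ}), one has |R(z(θ))| ≤ 1. That is, the implicit scheme combining the third-order L-stable SDIRK method with the third-order upwind-biased finite-difference discretization of ∂_t u + a ∂_x u = 0 on a periodic grid is unconditionally stable: every eigenvalue of the time stepper Φ has modulus at most 1 for every CFL number c = aΔt/Δx ≥ 0. -/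
-- ζ lower bound from the cubic
lemma zeta_lb (ζ : ℝ) (hζ1 : 2 / 5 < ζ) (hζ2 : ζ < 1 / 2)
    (hroot : ζ ^ 3 - 3 * ζ ^ 2 + (3 / 2) * ζ - 1 / 6 = 0) : 2177/5000 < ζ := by
  by_contra h
  push_neg at h
  nlinarith [mul_nonneg (sub_nonneg.2 h) (sub_nonneg.2 h), sq_nonneg (ζ - 2/5)]

set_option maxHeartbeats 2000000 in
lemma poly_ineq (ζ u y : ℝ) (h3 : 2177/5000 < ζ) (h2 : ζ < 1/2)
    (hroot : ζ ^ 3 - 3 * ζ ^ 2 + (3 / 2) * ζ - 1 / 6 = 0) (hu : 0 ≤ u) :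
    (1 - (1-3*ζ)*u + (3*ζ^2-3*ζ+1/2)*(u^2-y^2))^2 + ((1-3*ζ)*y - 2*(3*ζ^2-3*ζ+1/2)*u*y)^2
      ≤ ((1+ζ*u)^2 + ζ^2*y^2)^3 := by
  have hc04 : (0:ℝ) ≤ -1/4 + 2*ζ - 3*ζ^2 := by linarith [mul_nonneg (by linarith : (0:ℝ) ≤ ζ - 1/6) (by linarith : (0:ℝ) ≤ 1/2 - ζ)]
  have hc06 : (0:ℝ) ≤ 109/36 - 26*ζ + 175/4*ζ^2 := by linarith [sq_nonneg (ζ - 2177/5000)]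
  have hc14 : (0:ℝ) ≤ 15/2 - 129/2*ζ + 109*ζ^2 := by linarith [sq_nonneg (ζ - 2177/5000)]
  have hc20 : (0:ℝ) ≤ -2 + 12*ζ := by linarith
  have hc12 : (0:ℝ) ≤ 6*ζ^2 := by positivity
  have hc22 : (0:ℝ) ≤ 11/2 - 48*ζ + 84*ζ^2 := by linarith [sq_nonneg (ζ - 2177/5000)]
  have hc24 : (0:ℝ) ≤ 109/12 - 78*ζ + 525/4*ζ^2 := by linarith [sq_nonneg (ζ - 2177/5000)]
  have hc30 : (0:ℝ) ≤ 4/3 - 12*ζ + 30*ζ^2 := by linarith [sq_nonneg (ζ - 1/5)]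
  have hc32 : (0:ℝ) ≤ 15 - 129*ζ + 218*ζ^2 := by linarith [sq_nonneg (ζ - 2177/5000)]
  have hc40 : (0:ℝ) ≤ 23/4 - 50*ζ + 87*ζ^2 := by linarith [sq_nonneg (ζ - 2177/5000)]
  have key : ((1+ζ*u)^2 + ζ^2*y^2)^3
      - ((1 - (1-3*ζ)*u + (3*ζ^2-3*ζ+1/2)*(u^2-y^2))^2 + ((1-3*ζ)*y - 2*(3*ζ^2-3*ζ+1/2)*u*y)^2)
      = (-1/4 + 2*ζ - 3*ζ^2)*y^4 + (109/36 - 26*ζ + 175/4*ζ^2)*y^6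
      + 2*u + (6*ζ^2)*u*y^2 + (15/2 - 129/2*ζ + 109*ζ^2)*u*y^4
      + (-2 + 12*ζ)*u^2 + (11/2 - 48*ζ + 84*ζ^2)*u^2*y^2 + (109/12 - 78*ζ + 525/4*ζ^2)*u^2*y^4
      + (4/3 - 12*ζ + 30*ζ^2)*u^3 + (15 - 129*ζ + 218*ζ^2)*u^3*y^2
      + (23/4 - 50*ζ + 87*ζ^2)*u^4 + (109/12 - 78*ζ + 525/4*ζ^2)*u^4*y^2
      + (15/2 - 129/2*ζ + 109*ζ^2)*u^5 + (109/36 - 26*ζ + 175/4*ζ^2)*u^6 := by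
    linear_combination ((-6:ℝ)*y^4*ζ^1 + (109/6:ℝ)*y^6 + (15/2:ℝ)*y^6*ζ^1 + (3:ℝ)*y^6*ζ^2 + (1:ℝ)*y^6*ζ^3 + (-6:ℝ)*u^1*y^2 + (45:ℝ)*u^1*y^4 + (18:ℝ)*u^1*y^4*ζ^1 + (6:ℝ)*u^1*y^4*ζ^2 + (36:ℝ)*u^2*y^2 + (109/2:ℝ)*u^2*y^4 + (45/2:ℝ)*u^2*y^4*ζ^1 + (9:ℝ)*u^2*y^4*ζ^2 + (3:ℝ)*u^2*y^4*ζ^3 + (2:ℝ)*u^3 + (90:ℝ)*u^3*y^2 + (36:ℝ)*u^3*y^2*ζ^1 + (12:ℝ)*u^3*y^2*ζ^2 + (36:ℝ)*u^4 + (6:ℝ)*u^4*ζ^1 + (109/2:ℝ)*u^4*y^2 + (45/2:ℝ)*u^4*y^2*ζ^1 + (9:ℝ)*u^4*y^2*ζ^2 + (3:ℝ)*u^4*y^2*ζ^3 + (45:ℝ)*u^5 + (18:ℝ)*u^5*ζ^1 + (6:ℝ)*u^5*ζ^2 + (109/6:ℝ)*u^6 + (15/2:ℝ)*u^6*ζ^1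 + (3:ℝ)*u^6*ζ^2 + (1:ℝ)*u^6*ζ^3) * hroot
  have t0 : (0:ℝ) ≤ (-1/4 + 2*ζ - 3*ζ^2)*(y^4) := mul_nonneg hc04 (by positivity)
  have t1 : (0:ℝ) ≤ (109/36 - 26*ζ + 175/4*ζ^2)*(y^6) := mul_nonneg hc06 (by positivity)
  have t2 : (0:ℝ) ≤ 2*u := by linarith
  have t3 : (0:ℝ) ≤ (6*ζ^2)*(u*y^2) := mul_nonneg hc12 (by positivity)
  have t4 : (0:ℝ) ≤ (15/2 - 129/2*ζ + 109*ζ^2)*(u*y^4) := mul_nonneg hc14 (by positivity)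
  have t5 : (0:ℝ) ≤ (-2 + 12*ζ)*(u^2) := mul_nonneg hc20 (by positivity)
  have t6 : (0:ℝ) ≤ (11/2 - 48*ζ + 84*ζ^2)*(u^2*y^2) := mul_nonneg hc22 (by positivity)
  have t7 : (0:ℝ) ≤ (109/12 - 78*ζ + 525/4*ζ^2)*(u^2*y^4) := mul_nonneg hc24 (by positivity)
  have t8 : (0:ℝ) ≤ (4/3 - 12*ζ + 30*ζ^2)*(u^3) := mul_nonneg hc30 (by positivity)
  have t9 : (0:ℝ) ≤ (15 - 129*ζ + 218*ζ^2)*(u^3*y^2) := mul_nonneg hc32 (by positivity)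
  have t10 : (0:ℝ) ≤ (23/4 - 50*ζ + 87*ζ^2)*(u^4) := mul_nonneg hc40 (by positivity)
  have t11 : (0:ℝ) ≤ (109/12 - 78*ζ + 525/4*ζ^2)*(u^4*y^2) := mul_nonneg hc24 (by positivity)
  have t12 : (0:ℝ) ≤ (15/2 - 129/2*ζ + 109*ζ^2)*(u^5) := mul_nonneg hc14 (by positivity)
  have t13 : (0:ℝ) ≤ (109/36 - 26*ζ + 175/4*ζ^2)*(u^6) := mul_nonneg hc06 (by positivity)
  linarith [key, t0, t1, t2, t3, t4, t5, t6, t7, t8, t9, t10, t11, t12, t13]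


open Complex in
lemma astable (ζ : ℝ) (h3 : 2177/5000 < ζ) (h2 : ζ < 1/2)
    (hroot : ζ ^ 3 - 3 * ζ ^ 2 + (3 / 2) * ζ - 1 / 6 = 0) (z : ℂ) (hz : z.re ≤ 0)
    (hpoly : ∀ u y : ℝ, 0 ≤ u →
      (1 - (1-3*ζ)*u + (3*ζ^2-3*ζ+1/2)*(u^2-y^2))^2 + ((1-3*ζ)*y - 2*(3*ζ^2-3*ζ+1/2)*u*y)^2
      ≤ ((1+ζ*u)^2 + ζ^2*y^2)^3) :
    ‖(1 + (1 - 3 * (ζ : ℂ)) * z + (3 * (ζ : ℂ) ^ 2 - 3 * (ζ : ℂ) + 1 / 2) * z ^ 2) /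
        (1 - (ζ : ℂ) * z) ^ 3‖ ≤ 1 := by
  set N : ℂ := 1 + (1 - 3 * (ζ : ℂ)) * z + (3 * (ζ : ℂ) ^ 2 - 3 * (ζ : ℂ) + 1 / 2) * z ^ 2 with hN
  set D : ℂ := 1 - (ζ : ℂ) * z with hD
  have hzpos : (0:ℝ) < ζ := by linarith
  have hDre : D.re = 1 + ζ * (-z.re) := by simp [hD]; ring
  have hDrepos : (0:ℝ) < D.re := by
    rw [hDre]; nlinarith
  have hDne : D ≠ 0 := fun h => by rw [h] at hDrepos; simp at hDrepos
  have hDabs : 0 < ‖D‖ := norm_pos_iff.mpr hDne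
  rw [norm_div, norm_pow, div_le_one (pow_pos hDabs 3)]
  have hkey : Complex.normSq N ≤ (Complex.normSq D)^3 := by
    have h := hpoly (-z.re) z.im (by linarith)
    have hNsq : Complex.normSq N =
        (1 - (1-3*ζ)*(-z.re) + (3*ζ^2-3*ζ+1/2)*((-z.re)^2-z.im^2))^2
        + ((1-3*ζ)*z.im - 2*(3*ζ^2-3*ζ+1/2)*(-z.re)*z.im)^2 := by
      simp [hN, Complex.normSq_apply, Complex.add_re, Complex.add_im, Complex.mul_re,
        Complex.mul_im, Complex.sub_re, Complex.sub_im, Complex.ofReal_re, Complex.ofReal_im,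
        pow_two]
      ring
    have hDsq : (Complex.normSq D)^3 = ((1+ζ*(-z.re))^2 + ζ^2*z.im^2)^3 := by
      have : Complex.normSq D = (1+ζ*(-z.re))^2 + ζ^2*z.im^2 := by
        simp [hD, Complex.normSq_apply, Complex.sub_re, Complex.sub_im, Complex.mul_re,
          Complex.mul_im, Complex.ofReal_re, Complex.ofReal_im]
        ring
      rw [this]
    rw [hNsq, hDsq]; exact h
  have h1 : ‖N‖ ^ 2 ≤ (‖D‖ ^ 3) ^ 2 := by
    rw [Complex.sq_norm]
    calc Complex.normSq N ≤ (Complex.normSq D)^3 := hkey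
      _ = (‖D‖ ^ 3) ^ 2 := by rw [← Complex.sq_norm]; ring
  nlinarith [norm_nonneg N, pow_nonneg (norm_nonneg D) 3, h1]


lemma re_le (c θ : ℝ) (hc : 0 ≤ c) :
    ((-((c : ℂ) / 6) *
        (Complex.exp (-(2 * Complex.I * θ)) - 6 * Complex.exp (-(Complex.I * θ)) + 3 +
          2 * Complex.exp (Complex.I * θ))).re) ≤ 0 := by
  have E1 : Complex.exp (Complex.I * θ) = (Real.cos θ : ℂ) + (Real.sin θ : ℂ) * Complex.I := by
    rw [mul_comm, Complex.exp_mul_I, Complex.ofReal_cos, Complex.ofReal_sin]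
  have a2 : -(Complex.I * (θ:ℂ)) = ((-θ : ℝ) : ℂ) * Complex.I := by push_cast; ring
  have E2 : Complex.exp (-(Complex.I * θ)) = (Real.cos θ : ℂ) - (Real.sin θ : ℂ) * Complex.I := by
    rw [a2, Complex.exp_mul_I]
    push_cast [Real.cos_neg, Real.sin_neg, Complex.cos_neg, Complex.sin_neg]
    ring
  have a3 : -(2 * Complex.I * (θ:ℂ)) = ((-(2*θ) : ℝ) : ℂ) * Complex.I := by push_cast; ring
  have E3 : Complex.exp (-(2 * Complex.I * θ))
      = (Real.cos (2*θ) : ℂ) - (Real.sin (2*θ) : ℂ) * Complex.I := by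
    rw [a3, Complex.exp_mul_I]
    push_cast [Complex.cos_neg, Complex.sin_neg]
    ring
  have big : (Complex.exp (-(2 * Complex.I * θ)) - 6 * Complex.exp (-(Complex.I * θ)) + 3 +
        2 * Complex.exp (Complex.I * θ))
      = ((Real.cos (2*θ) - 4 * Real.cos θ + 3 : ℝ) : ℂ)
        + ((8 * Real.sin θ - Real.sin (2*θ) : ℝ) : ℂ) * Complex.I := by
    rw [E1, E2, E3]; push_cast; ring
  have hs : -((c:ℂ)/6) = ((-(c/6) : ℝ) : ℂ) := by push_cast; ring
  rw [big, hs, Complex.re_ofReal_mul]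
  have hre : (((Real.cos (2*θ) - 4 * Real.cos θ + 3 : ℝ) : ℂ)
        + ((8 * Real.sin θ - Real.sin (2*θ) : ℝ) : ℂ) * Complex.I).re
      = Real.cos (2*θ) - 4 * Real.cos θ + 3 := by
    simp only [Complex.add_re, Complex.re_ofReal_mul, Complex.I_re, Complex.ofReal_re, mul_zero, add_zero]
  rw [hre, Real.cos_two_mul]
  nlinarith [sq_nonneg (Real.cos θ - 1)]

/-- Unconditional stability of the implicit scheme pairing the third-order L-stable SDIRK
method (stability function `R(z) = (1 + (1 − 3ζ)z + (3ζ² − 3ζ + 1/2)z²)/(1 − ζz)³`, with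
`ζ` the real root in `(2/5, 1/2)` of `x³ − 3x² + (3/2)x − 1/6 = 0`) with the third-order
upwind-biased finite-difference discretization of the advection equation (symbol
`z(θ) = −(c/6)(e^{−2iθ} − 6e^{−iθ} + 3 + 2e^{iθ})`): for every CFL number `c ≥ 0` and
every frequency `θ`, `|R(z(θ))| ≤ 1`. -/
theorem stmt_14 (ζ : ℝ) (hζ1 : 2 / 5 < ζ) (hζ2 : ζ < 1 / 2)
    (hroot : ζ ^ 3 - 3 * ζ ^ 2 + (3 / 2) * ζ - 1 / 6 = 0)
    (R : ℂ → ℂ)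
    (hR : ∀ z : ℂ, R z =
      (1 + (1 - 3 * (ζ : ℂ)) * z + (3 * (ζ : ℂ) ^ 2 - 3 * (ζ : ℂ) + 1 / 2) * z ^ 2) /
        (1 - (ζ : ℂ) * z) ^ 3) :
    ∀ c : ℝ, 0 ≤ c → ∀ θ : ℝ, ∀ z : ℂ,
      z = -((c : ℂ) / 6) *
        (Complex.exp (-(2 * Complex.I * θ)) - 6 * Complex.exp (-(Complex.I * θ)) + 3 +
          2 * Complex.exp (Complex.I * θ)) →
      ‖R z‖ ≤ 1 := by
  intro c hc θ z hz
  have h3 : 2177/5000 < ζ := zeta_lb ζ hζ1 hζ2 hroot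
  have hzre : z.re ≤ 0 := by rw [hz]; exact re_le c θ hc
  rw [hR z]
  exact astable ζ h3 hζ2 hroot z hzre (fun u y hu => poly_ineq ζ u y h3 hζ2 hroot hu)
end
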